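/- If the tensors U, V, W satisfy the exactness condition Σ_{r=1}^R u_{klr} v_{k'l'r} w_{ijr} = δ_{ki} δ_{l'j} δ_{lk'} for all (k,l,k',l',i,j) ∈ {1,…,n}^6, then κ = 0 and, for every choice of sign functions s_1,s_2,s_3 and permutations π_1,π_2,π_3 and all A, B ∈ ℝ^{mn×mn}, the randomized computation is exact: f̂(A,B) = A·B. -/
import Mathlib


open scoped BigOperators Matrix

/-- Frobenius norm of a real matrix. -/
noncomputable def frob {ι κ : Type*} [Fintype ι] [Fintype κ] (A : Matrix ι κ ℝ) : ℝ :=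
  Real.sqrt (∑ i, ∑ j, (A i j) ^ 2)

/-- Frobenius norm of a 6-mode tensor. -/
noncomputable def frob6 {n : ℕ} (T : Fin n → Fin n → Fin n → Fin n → Fin n → Fin n → ℝ) : ℝ :=
  Real.sqrt (∑ k, ∑ l, ∑ k', ∑ l', ∑ i, ∑ j, (T k l k' l' i j) ^ 2)

/-- The 6-mode tensor Y with entries y_{klk'l'ij} = Σ_r u_{klr} v_{k'l'r} w_{ijr}. -/
noncomputable def Ytens {n R : ℕ} (U V W : Fin n → Fin n → Fin R → ℝ) :
    Fin n → Fin n → Fin n → Fin n → Fin n → Fin n → ℝ :=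
  fun k l k' l' i j => ∑ r, U k l r * V k' l' r * W i j r

/-- The exact matrix-multiplication tensor X, x_{klk'l'ij} = δ_{ki} δ_{l'j} δ_{lk'}. -/
def Xtens (n : ℕ) : Fin n → Fin n → Fin n → Fin n → Fin n → Fin n → ℝ :=
  fun k l k' l' i j =>
    (if k = i then (1 : ℝ) else 0) * (if l' = j then (1 : ℝ) else 0) *
      (if l = k' then (1 : ℝ) else 0)

/-- The block bilinear computation f on (mn)×(mn) matrices indexed by Fin n × Fin m
(first index: block position, second index: position within the m×m block). -/
noncomputable def blinf {n R m : ℕ} (U V W : Fin n → Fin n → Fin R → ℝ)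
    (A B : Matrix (Fin n × Fin m) (Fin n × Fin m) ℝ) :
    Matrix (Fin n × Fin m) (Fin n × Fin m) ℝ :=
  fun p q => ∑ r, W p.1 q.1 r *
    ∑ z, (∑ k, ∑ l, U k l r * A (k, p.2) (l, z)) *
         (∑ k', ∑ l', V k' l' r * B (k', z) (l', q.2))

/-- κ = n⁻³ Σ_{i,j,l} (1 − Σ_r u_{ilr} v_{ljr} w_{ijr}). -/
noncomputable def kappa {n R : ℕ} (U V W : Fin n → Fin n → Fin R → ℝ) : ℝ :=
  ((n : ℝ) ^ 3)⁻¹ * ∑ i, ∑ j, ∑ l, (1 - ∑ r, U i l r * V l j r * W i j r)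

/-- M = P S : block matrix with m×m block s(j)·I_m at block position (π(j), j). -/
def Mmat {n : ℕ} (m : ℕ) (s : Fin n → ℝ) (π : Equiv.Perm (Fin n)) :
    Matrix (Fin n × Fin m) (Fin n × Fin m) ℝ :=
  fun p q => if p.1 = π q.1 ∧ p.2 = q.2 then s q.1 else 0

/-- The randomized bilinear computation f̂(A,B) = (1−κ)⁻¹ M₁ᵀ f(M₁AM₂ᵀ, M₂BM₃ᵀ) M₃. -/
noncomputable def fhat {n R : ℕ} (m : ℕ) (U V W : Fin n → Fin n → Fin R → ℝ)
    (s₁ s₂ s₃ : Fin n → ℝ) (π₁ π₂ π₃ : Equiv.Perm (Fin n))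
    (A B : Matrix (Fin n × Fin m) (Fin n × Fin m) ℝ) :
    Matrix (Fin n × Fin m) (Fin n × Fin m) ℝ :=
  (1 - kappa U V W)⁻¹ •
    ((Mmat m s₁ π₁)ᵀ *
      blinf U V W (Mmat m s₁ π₁ * A * (Mmat m s₂ π₂)ᵀ) (Mmat m s₂ π₂ * B * (Mmat m s₃ π₃)ᵀ) *
      Mmat m s₃ π₃)



private lemma Mmat_orth {n m : ℕ} (s : Fin n → ℝ) (hs : ∀ j, s j = 1 ∨ s j = -1)
    (π : Equiv.Perm (Fin n)) : (Mmat m s π)ᵀ * Mmat m s π = 1 := by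
  ext p q
  simp only [Matrix.mul_apply, Matrix.transpose_apply, Mmat, Matrix.one_apply,
    Fintype.sum_prod_type]
  rcases eq_or_ne p q with rfl | h
  · simp only [if_pos rfl]
    rw [Finset.sum_eq_single (π p.1)]
    · rw [Finset.sum_eq_single p.2]
      · simp; rcases hs p.1 with h | h <;> simp [h]
      · intro b _ hb; simp [hb]
      · simp
    · intro b _ hb; simp [hb]
    · simp
  · rw [if_neg h]
    apply Finset.sum_eq_zero; intro a _
    apply Finset.sum_eq_zero; intro b _
    by_cases h1 : a = π p.1 ∧ b = p.2
    · by_cases h2 : a = π q.1 ∧ b = q.2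
      · exfalso; apply h; obtain ⟨h1a, h1b⟩ := h1; obtain ⟨h2a, h2b⟩ := h2
        have := π.injective (h1a ▸ h2a : π p.1 = π q.1)
        exact Prod.ext this (h1b ▸ h2b)
      · simp [h2]
    · simp [h1]

private lemma key {n R : ℕ} (U V W : Fin n → Fin n → Fin R → ℝ) (i j : Fin n)
    (x y : Fin n → Fin n → ℝ) :
    ∑ r, W i j r * ((∑ k, ∑ l, U k l r * x k l) * (∑ k', ∑ l', V k' l' r * y k' l')) =
    ∑ a, ∑ b, ∑ c, ∑ d, (∑ r, U c d r * V a b r * W i j r) * (x c d * y a b) := by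
  simp only [Finset.mul_sum, Finset.sum_mul]
  rw [Finset.sum_comm]
  refine Finset.sum_congr rfl fun a _ => ?_
  rw [Finset.sum_comm]
  refine Finset.sum_congr rfl fun b _ => ?_
  rw [Finset.sum_comm]
  refine Finset.sum_congr rfl fun c _ => ?_
  rw [Finset.sum_comm]
  refine Finset.sum_congr rfl fun d _ => ?_
  refine Finset.sum_congr rfl fun r _ => ?_
  ring

private lemma blinf_eq {n R m : ℕ} (U V W : Fin n → Fin n → Fin R → ℝ)
    (hexact : ∀ k l k' l' i j : Fin n,
      (∑ r, U k l r * V k' l' r * W i j r) =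
        (if k = i then (1 : ℝ) else 0) * (if l' = j then (1 : ℝ) else 0) *
          (if l = k' then (1 : ℝ) else 0))
    (A B : Matrix (Fin n × Fin m) (Fin n × Fin m) ℝ) :
    blinf U V W A B = A * B := by
  ext ⟨i, a⟩ ⟨j, b⟩
  show (∑ r, W i j r *
      ∑ z, (∑ k, ∑ l, U k l r * A (k, a) (l, z)) *
           (∑ k', ∑ l', V k' l' r * B (k', z) (l', b))) = (A * B) (i, a) (j, b)
  rw [Matrix.mul_apply, Fintype.sum_prod_type]
  calc (∑ r, W i j r *
      ∑ z, (∑ k, ∑ l, U k l r * A (k, a) (l, z)) *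
           (∑ k', ∑ l', V k' l' r * B (k', z) (l', b)))
      = ∑ r, ∑ z : Fin m, W i j r *
          ((∑ k, ∑ l, U k l r * A (k, a) (l, z)) *
           (∑ k', ∑ l', V k' l' r * B (k', z) (l', b))) :=
        Finset.sum_congr rfl fun r _ => Finset.mul_sum _ _ _
    _ = ∑ z : Fin m, ∑ r, W i j r *
          ((∑ k, ∑ l, U k l r * A (k, a) (l, z)) *
           (∑ k', ∑ l', V k' l' r * B (k', z) (l', b))) := Finset.sum_comm
    _ = ∑ z : Fin m, ∑ a' : Fin n, ∑ b' : Fin n, ∑ c : Fin n, ∑ d : Fin n,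
          (∑ r, U c d r * V a' b' r * W i j r) * (A (c, a) (d, z) * B (a', z) (b', b)) :=
        Finset.sum_congr rfl fun z _ =>
          key U V W i j (fun k l => A (k, a) (l, z)) (fun k' l' => B (k', z) (l', b))
    _ = ∑ x : Fin n, ∑ y : Fin m, A (i, a) (x, y) * B (x, y) (j, b) := by
        simp only [hexact]
        rw [Finset.sum_comm]
        refine Finset.sum_congr rfl fun x _ => ?_
        refine Finset.sum_congr rfl fun z _ => ?_
        simp [Finset.sum_ite_eq, Finset.sum_ite_eq', ite_mul, mul_ite, Finset.mul_sum]

private lemma cancel_left {ι : Type*} [Fintype ι] [DecidableEq ι]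
    {M C : Matrix ι ι ℝ} (h : Mᵀ * M = 1) : Mᵀ * (M * C) = C := by
  rw [← Matrix.mul_assoc, h, Matrix.one_mul]


theorem stmt12 (n R m : ℕ) (hn : 0 < n) (hR : 0 < R) (hm : 1 ≤ m)
    (U V W : Fin n → Fin n → Fin R → ℝ)
    (hexact : ∀ k l k' l' i j : Fin n,
      (∑ r, U k l r * V k' l' r * W i j r) =
        (if k = i then (1 : ℝ) else 0) * (if l' = j then (1 : ℝ) else 0) *
          (if l = k' then (1 : ℝ) else 0)) :
    kappa U V W = 0 ∧
    ∀ (s₁ s₂ s₃ : Fin n → ℝ),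
      (∀ j, s₁ j = 1 ∨ s₁ j = -1) → (∀ j, s₂ j = 1 ∨ s₂ j = -1) →
      (∀ j, s₃ j = 1 ∨ s₃ j = -1) →
      ∀ (π₁ π₂ π₃ : Equiv.Perm (Fin n))
        (A B : Matrix (Fin n × Fin m) (Fin n × Fin m) ℝ),
        fhat m U V W s₁ s₂ s₃ π₁ π₂ π₃ A B = A * B := by
  have hk : kappa U V W = 0 := by
    have : ∀ i j l : Fin n, (1 : ℝ) - ∑ r, U i l r * V l j r * W i j r = 0 := by
      intro i j l; rw [hexact]; simp
    simp [kappa, this]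
  refine ⟨hk, ?_⟩
  intro s₁ s₂ s₃ hs₁ hs₂ hs₃ π₁ π₂ π₃ A B
  have o1 := Mmat_orth (m := m) s₁ hs₁ π₁
  have o2 := Mmat_orth (m := m) s₂ hs₂ π₂
  have o3 := Mmat_orth (m := m) s₃ hs₃ π₃
  rw [fhat, hk, blinf_eq U V W hexact]
  simp only [sub_zero, inv_one, one_smul]
  simp only [Matrix.mul_assoc]
  rw [o3, Matrix.mul_one, cancel_left o2, cancel_left o1]
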